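/- Let k ≥ 2 and n = 2k. For every integer s ≥ 1, α_{2k, s(k−1)} = sk; that is, the least total degree of a monomial belonging to I_{B_{2k}}^{(s(k−1))} equals sk. -/

import Mathlib

open MvPolynomial
open Fin.NatCast

/-- The subtree (arc) of `n-2` consecutive cycle vertices of the `n`-cycle `Q_n`
(on vertices `1,…,n` inside `Fin (n+2)`), starting at vertex `i+1`, for `i = 0,…,n-1`.
The family `arcT n i`, `i < n`, is exactly the family `𝒯` of subtrees of `Q_n`
with `n-2` vertices. -/
def arcT (n i : ℕ) : Finset (Fin (n + 2)) :=
  (Finset.range (n - 2)).image fun t => (((i + t) % n + 1 : ℕ) : Fin (n + 2))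

/-- The monomial prime ideal `⟨x_v⟩ + ⟨x_j : j ∈ S⟩`. -/
noncomputable def apexIdeal (K : Type*) [Field K] (n : ℕ) (v : Fin (n + 2))
    (S : Finset (Fin (n + 2))) : Ideal (MvPolynomial (Fin (n + 2)) K) :=
  Ideal.span (insert (X v) (X '' (S : Set (Fin (n+2))) : Set (MvPolynomial (Fin (n + 2)) K)))

/-- The `m`-th symbolic power `I_{B_n}^{(m)} = ⋂_{S ∈ 𝒯} (I_{[0,S]}^m ∩ I_{[n+1,S]}^m)`. -/
noncomputable def symbPow (K : Type*) [Field K] (n m : ℕ) : Ideal (MvPolynomial (Fin (n + 2)) K) :=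
  ⨅ i ∈ Finset.range n,
    apexIdeal K n 0 (arcT n i) ^ m ⊓ apexIdeal K n ((n + 1 : ℕ) : Fin (n + 2)) (arcT n i) ^ m

/-- The monomial `x_0^{a_0} x_1^{a_1} ⋯ x_{n+1}^{a_{n+1}}`. -/
noncomputable def monom (K : Type*) [Field K] (n : ℕ) (a : Fin (n + 2) → ℕ) :
    MvPolynomial (Fin (n + 2)) K :=
  ∏ i, X i ^ a i

/-- `α_{n,m}`: the least total degree of a monomial lying in `I_{B_n}^{(m)}`. -/
noncomputable def alphaSymb (K : Type*) [Field K] (n m : ℕ) : ℕ :=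
  sInf {d | ∃ a : Fin (n + 2) → ℕ, (∑ i, a i) = d ∧ monom K n a ∈ symbPow K n m}

/-- The Stanley–Reisner ideal `I_{B_n}` of the bipyramid `B_n`, presented by its
quadratic generators: `x_0 x_{n+1}` together with `x_i x_j` for non-adjacent
vertices `i, j` of the cycle `Q_n`. -/
noncomputable def bipyrIdeal (K : Type*) [Field K] (n : ℕ) : Ideal (MvPolynomial (Fin (n + 2)) K) :=
  Ideal.span ({X (0 : Fin (n + 2)) * X ((n + 1 : ℕ) : Fin (n + 2))} ∪
    {p | ∃ i j : ℕ, 1 ≤ i ∧ i ≤ n ∧ 1 ≤ j ∧ j ≤ n ∧ i ≠ j ∧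
      j ≠ i % n + 1 ∧ i ≠ j % n + 1 ∧
      p = X ((i : ℕ) : Fin (n + 2)) * X ((j : ℕ) : Fin (n + 2))})

section Aux

lemma prod_pow_mem_pow {R ι : Type*} [CommRing R] (P : Ideal R) (t : Finset ι)
    (f : ι → R) (b : ι → ℕ) (h : ∀ i ∈ t, f i ∈ P) :
    (∏ i ∈ t, f i ^ b i) ∈ P ^ (∑ i ∈ t, b i) := by
  classical
  induction t using Finset.induction_on with
  | empty => simp
  | @insert x tt hx ih =>
    rw [Finset.prod_insert hx, Finset.sum_insert hx, pow_add]
    exact Ideal.mul_mem_mul (Ideal.pow_mem_pow (h x (Finset.mem_insert_self x tt)) _)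
      (ih fun i hi => h i (Finset.mem_insert_of_mem hi))

lemma monom_mem_span_pow_iff (K : Type*) [Field K] (n m : ℕ) (a : Fin (n+2) → ℕ)
    (T : Finset (Fin (n+2))) :
    monom K n a ∈ (Ideal.span ((X '' (T : Set (Fin (n+2)))) :
        Set (MvPolynomial (Fin (n+2)) K))) ^ m ↔ m ≤ ∑ v ∈ T, a v := by
  classical
  constructor
  · intro h
    set φ : MvPolynomial (Fin (n+2)) K →ₐ[K] Polynomial K :=
      aeval (fun w => if w ∈ T then Polynomial.X else 1) with hφ
    have hmap : (Ideal.span ((X '' (T : Set (Fin (n+2)))) :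
        Set (MvPolynomial (Fin (n+2)) K))).map φ.toRingHom ≤ Ideal.span {Polynomial.X} := by
      rw [Ideal.map_span]
      apply Ideal.span_le.2
      rintro p ⟨q, ⟨v, hv, rfl⟩, rfl⟩
      have hv' : v ∈ T := hv
      simp only [hφ, AlgHom.toRingHom_eq_coe, RingHom.coe_coe, aeval_X, if_pos hv']
      exact Ideal.subset_span (by simp)
    have h2 : φ (monom K n a) ∈ Ideal.span {Polynomial.X ^ m} := by
      have := Ideal.mem_map_of_mem φ.toRingHom h
      rw [Ideal.map_pow] at this
      have h3 := Ideal.pow_right_mono hmap m this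
      rwa [Ideal.span_singleton_pow] at h3
    have hval : φ (monom K n a) = Polynomial.X ^ (∑ v ∈ T, a v) := by
      rw [monom, map_prod]
      rw [← Finset.prod_mul_prod_compl T]
      have h4 : ∀ v ∈ T, φ (X v ^ a v) = Polynomial.X ^ a v := by
        intro v hv; rw [map_pow]; simp [hφ, hv]
      have h5 : ∀ v ∈ Tᶜ, φ (X v ^ a v) = 1 := by
        intro v hv; rw [map_pow]
        simp only [Finset.mem_compl] at hv
        simp [hφ, hv]
      rw [Finset.prod_congr rfl h4, Finset.prod_congr rfl h5, Finset.prod_const_one, mul_one,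
        Finset.prod_pow_eq_pow_sum]
    rw [hval, Ideal.mem_span_singleton] at h2
    obtain ⟨g, hg⟩ := h2
    have hgne : g ≠ 0 := by
      intro h0; rw [h0, mul_zero] at hg
      exact pow_ne_zero _ Polynomial.X_ne_zero hg
    have := congrArg Polynomial.natDegree hg
    rw [Polynomial.natDegree_mul (pow_ne_zero _ Polynomial.X_ne_zero) hgne,
      Polynomial.natDegree_X_pow, Polynomial.natDegree_X_pow] at this
    omega
  · intro h
    rw [monom, ← Finset.prod_mul_prod_compl T]
    apply Ideal.mul_mem_right
    have h1 : (∏ v ∈ T, X v ^ a v : MvPolynomial (Fin (n+2)) K) ∈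
        (Ideal.span ((X '' (T : Set (Fin (n+2)))) :
        Set (MvPolynomial (Fin (n+2)) K))) ^ (∑ v ∈ T, a v) :=
      prod_pow_mem_pow _ _ _ _ fun v hv => Ideal.subset_span ⟨v, hv, rfl⟩
    exact Ideal.pow_le_pow_right h h1

lemma apexIdeal_eq (K : Type*) [Field K] (n : ℕ) (v : Fin (n+2)) (S : Finset (Fin (n+2))) :
    apexIdeal K n v S =
      Ideal.span ((X '' ((insert v S : Finset (Fin (n+2))) : Set (Fin (n+2)))) :
        Set (MvPolynomial (Fin (n+2)) K)) := by
  rw [apexIdeal, Finset.coe_insert, Set.image_insert_eq]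

lemma monom_mem_apexIdeal_pow_iff (K : Type*) [Field K] (n m : ℕ) (a : Fin (n+2) → ℕ)
    (v : Fin (n+2)) (S : Finset (Fin (n+2))) (hv : v ∉ S) :
    monom K n a ∈ (apexIdeal K n v S) ^ m ↔ m ≤ a v + ∑ w ∈ S, a w := by
  rw [apexIdeal_eq, monom_mem_span_pow_iff, Finset.sum_insert hv]

lemma sumIf2 (s c : ℕ) : ∀ N, (∑ t ∈ Finset.range (2*N), if (c+t)%2 = 0 then s else 0) = N*s := by
  intro N
  induction N with
  | zero => simp
  | succ N ih =>
    have h2 : 2*(N+1) = 2*N + 1 + 1 := by ring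
    rw [h2, Finset.sum_range_succ, Finset.sum_range_succ, ih]
    have h3 : ((if (c+(2*N))%2 = 0 then s else 0) + (if (c+(2*N+1))%2 = 0 then s else 0)) = s := by
      split_ifs <;> omega
    rw [add_mul, one_mul]
    omega

lemma sum_shift (g : ℕ → ℕ) (n : ℕ) :
    ∀ t, ∑ i ∈ Finset.range n, g ((i+t) % n) = ∑ i ∈ Finset.range n, g (i % n) := by
  intro t
  induction t with
  | zero => simp
  | succ t ih =>
    calc ∑ i ∈ Finset.range n, g ((i + (t+1)) % n)
        = ∑ i ∈ Finset.range n, g (((i+1) + t) % n) := by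
          refine Finset.sum_congr rfl fun i _ => ?_
          have : i + (t+1) = i + 1 + t := by omega
          rw [this]
      _ = ∑ i ∈ Finset.range n, g ((i + t) % n) := by
          have h1 := Finset.sum_range_succ' (fun x => g ((x + t) % n)) n
          have h2 := Finset.sum_range_succ (fun x => g ((x + t) % n)) n
          have h3 : g ((n + t) % n) = g ((0 + t) % n) := by
            rw [Nat.zero_add, Nat.add_mod_left]
          omega
      _ = _ := ih

lemma arc_mem_bounds {n i : ℕ} (hn : 0 < n) {v : Fin (n+2)} (hv : v ∈ arcT n i) :
    1 ≤ (v : ℕ) ∧ (v : ℕ) ≤ n := by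
  simp only [arcT, Finset.mem_image, Finset.mem_range] at hv
  obtain ⟨t, _, rfl⟩ := hv
  have h1 : (i + t) % n < n := Nat.mod_lt _ hn
  rw [Fin.val_cast_of_lt (by omega)]
  omega

lemma zero_not_mem_arc {n i : ℕ} (hn : 0 < n) : (0 : Fin (n+2)) ∉ arcT n i := by
  intro h
  have := (arc_mem_bounds hn h).1
  simp at this

lemma top_not_mem_arc {n i : ℕ} (hn : 0 < n) : (((n+1 : ℕ)) : Fin (n+2)) ∉ arcT n i := by
  intro h
  have := (arc_mem_bounds hn h).2
  rw [Fin.val_cast_of_lt (by omega)] at this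
  omega

lemma arc_sum {n : ℕ} (hn : 0 < n) (i : ℕ) (a : Fin (n+2) → ℕ) :
    ∑ v ∈ arcT n i, a v = ∑ t ∈ Finset.range (n-2), a (((i + t) % n + 1 : ℕ) : Fin (n + 2)) := by
  rw [arcT, Finset.sum_image]
  intro t₁ h₁ t₂ h₂ h
  simp only [Finset.mem_coe, Finset.coe_range, Set.mem_Iio, Finset.mem_range] at h₁ h₂
  have hv : ∀ t, (i + t) % n + 1 < n + 2 := fun t => by have := Nat.mod_lt (i+t) hn; omega
  have h' : (i + t₁) % n + 1 = (i + t₂) % n + 1 := by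
    have := congrArg Fin.val h
    rwa [Fin.val_cast_of_lt (hv t₁), Fin.val_cast_of_lt (hv t₂)] at this
  have h'' : (i+t₁) % n = (i+t₂) % n := by omega
  have hm : t₁ ≡ t₂ [MOD n] := Nat.ModEq.add_left_cancel' i h''
  exact hm.eq_of_lt_of_lt (by omega) (by omega)

lemma mem_symbPow_iff (K : Type*) [Field K] (n m : ℕ) (p : MvPolynomial (Fin (n+2)) K) :
    p ∈ symbPow K n m ↔ ∀ i ∈ Finset.range n,
      p ∈ apexIdeal K n 0 (arcT n i) ^ m ∧
      p ∈ apexIdeal K n ((n + 1 : ℕ) : Fin (n + 2)) (arcT n i) ^ m := by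
  simp only [symbPow, Submodule.mem_iInf, Submodule.mem_inf]

end Aux

/-- For `k ≥ 2`, `n = 2k` and every `s ≥ 1`: `α_{2k, s(k-1)} = sk`. -/
theorem alpha_even_case (K : Type*) [Field K] (k s : ℕ) (hk : 2 ≤ k) (hs : 1 ≤ s) :
    alphaSymb K (2 * k) (s * (k - 1)) = s * k := by
  classical
  set n := 2 * k with hn
  set m := s * (k - 1) with hm
  have hn0 : 0 < n := by omega
  -- the natural-number exponent pattern
  set f : ℕ → ℕ := fun j => if j % 2 = 0 ∧ j ≠ 0 then s else 0 with hf
  set aw : Fin (n + 2) → ℕ := fun v => f (v : ℕ) with haw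
  -- arc sums of the witness
  have harc : ∀ i : ℕ, ∑ v ∈ arcT n i, aw v = (k-1) * s := by
    intro i
    rw [arc_sum hn0 i aw]
    have hpt : ∀ t ∈ Finset.range (n-2),
        aw (((i + t) % n + 1 : ℕ) : Fin (n + 2)) = if (i+1+t) % 2 = 0 then s else 0 := by
      intro t _
      have h1 : (i + t) % n < n := Nat.mod_lt _ hn0
      have hval : ((((i + t) % n + 1 : ℕ) : Fin (n + 2)) : ℕ) = (i + t) % n + 1 :=
        Fin.val_cast_of_lt (by omega)
      have h2 : (i + t) % n % 2 = (i + t) % 2 := Nat.mod_mod_of_dvd _ ⟨k, hn⟩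
      simp only [haw, hf]
      rw [hval]
      have hiff : (((i+t)%n+1) % 2 = 0 ∧ (i+t)%n+1 ≠ 0) ↔ ((i+1+t) % 2 = 0) := by
        constructor
        · rintro ⟨hc, -⟩; omega
        · intro hc; exact ⟨by omega, by omega⟩
      rw [if_congr hiff rfl rfl]
    rw [Finset.sum_congr rfl hpt]
    have h5 : n - 2 = 2 * (k - 1) := by omega
    rw [h5, sumIf2 s (i+1) (k-1)]
  -- total degree of the witness
  have hdeg : ∑ v : Fin (n+2), aw v = s * k := by
    have h1 : ∑ v : Fin (n+2), aw v = ∑ j ∈ Finset.range (n+2), f j := by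
      simp only [haw]
      exact Fin.sum_univ_eq_sum_range f (n+2)
    have h2 : ∀ j, (if j % 2 = 0 then s else 0) = f j + (if j = 0 then s else 0) := by
      intro j
      simp only [hf]
      by_cases hj : j = 0
      · subst hj; norm_num
      · by_cases hp : j % 2 = 0 <;> simp [hj, hp]
    have h3 : ∑ j ∈ Finset.range (n+2), (if j % 2 = 0 then s else 0) = (k+1) * s := by
      have h4 : ∀ j, (if j % 2 = 0 then s else 0) = (if (0+j) % 2 = 0 then s else 0) := by
        intro j; rw [Nat.zero_add]
      rw [Finset.sum_congr rfl fun j _ => h4 j]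
      have h5 : n + 2 = 2 * (k+1) := by omega
      rw [h5, sumIf2 s 0 (k+1)]
    rw [Finset.sum_congr rfl fun j _ => h2 j, Finset.sum_add_distrib,
      Finset.sum_ite_eq' (Finset.range (n+2)) 0 (fun _ => s)] at h3
    have h0mem : (0 : ℕ) ∈ Finset.range (n+2) := Finset.mem_range.2 (by omega)
    rw [if_pos h0mem, add_mul, one_mul] at h3
    have h6 : ∑ j ∈ Finset.range (n+2), f j = k * s := by omega
    rw [h1, h6, Nat.mul_comm]
  -- witness apex values vanish
  have haw0 : aw 0 = 0 := by simp [haw, hf]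
  have hawtop : aw (((n+1 : ℕ)) : Fin (n+2)) = 0 := by
    simp only [haw, hf]
    rw [Fin.val_cast_of_lt (show n + 1 < n + 2 by omega)]
    have hpar : (n + 1) % 2 = 1 := by omega
    simp [hpar]
  -- witness membership
  have hmem : monom K n aw ∈ symbPow K n m := by
    rw [mem_symbPow_iff]
    intro i _
    constructor
    · rw [monom_mem_apexIdeal_pow_iff K n m aw _ _ (zero_not_mem_arc hn0)]
      rw [harc i, haw0, hm]
      have : s * (k-1) = (k-1) * s := Nat.mul_comm _ _
      omega
    · rw [monom_mem_apexIdeal_pow_iff K n m aw _ _ (top_not_mem_arc hn0)]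
      rw [harc i, hawtop, hm]
      have : s * (k-1) = (k-1) * s := Nat.mul_comm _ _
      omega
  -- lower bound
  have hlow : ∀ d ∈ {d | ∃ a : Fin (n + 2) → ℕ, (∑ i, a i) = d ∧ monom K n a ∈ symbPow K n m},
      s * k ≤ d := by
    rintro d ⟨a, rfl, hmem'⟩
    rw [mem_symbPow_iff] at hmem'
    set g : ℕ → ℕ := fun j => a ((j + 1 : ℕ) : Fin (n+2)) with hg
    set C : ℕ := ∑ j ∈ Finset.range n, g j with hC
    -- each arc inequality
    have hineq : ∀ i ∈ Finset.range n,
        m ≤ a 0 + ∑ t ∈ Finset.range (n-2), g ((i+t) % n) ∧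
        m ≤ a (((n+1 : ℕ)) : Fin (n+2)) + ∑ t ∈ Finset.range (n-2), g ((i+t) % n) := by
      intro i hi
      obtain ⟨h1, h2⟩ := hmem' i hi
      rw [monom_mem_apexIdeal_pow_iff K n m a _ _ (zero_not_mem_arc hn0)] at h1
      rw [monom_mem_apexIdeal_pow_iff K n m a _ _ (top_not_mem_arc hn0)] at h2
      rw [arc_sum hn0 i a] at h1 h2
      exact ⟨h1, h2⟩
    -- sum of arc sums
    have hAsum : ∑ i ∈ Finset.range n, (∑ t ∈ Finset.range (n-2), g ((i+t) % n))
        = (n - 2) * C := by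
      rw [Finset.sum_comm]
      have h1 : ∀ t ∈ Finset.range (n-2),
          ∑ i ∈ Finset.range n, g ((i+t) % n) = C := by
        intro t _
        rw [sum_shift g n t, hC]
        refine Finset.sum_congr rfl fun j hj => ?_
        rw [Nat.mod_eq_of_lt (Finset.mem_range.1 hj)]
      rw [Finset.sum_congr rfl h1, Finset.sum_const, Finset.card_range, smul_eq_mul]
    -- summed inequalities
    have hsum1 : n * m ≤ n * a 0 + (n-2) * C := by
      calc n * m = ∑ _i ∈ Finset.range n, m := by
            rw [Finset.sum_const, Finset.card_range, smul_eq_mul]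
        _ ≤ ∑ i ∈ Finset.range n, (a 0 + ∑ t ∈ Finset.range (n-2), g ((i+t) % n)) :=
            Finset.sum_le_sum fun i hi => (hineq i hi).1
        _ = n * a 0 + (n-2) * C := by
            rw [Finset.sum_add_distrib, Finset.sum_const, Finset.card_range, smul_eq_mul, hAsum]
    have hsum2 : n * m ≤ n * a (((n+1 : ℕ)) : Fin (n+2)) + (n-2) * C := by
      calc n * m = ∑ _i ∈ Finset.range n, m := by
            rw [Finset.sum_const, Finset.card_range, smul_eq_mul]
        _ ≤ ∑ i ∈ Finset.range n, (a (((n+1 : ℕ)) : Fin (n+2)) +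
              ∑ t ∈ Finset.range (n-2), g ((i+t) % n)) :=
            Finset.sum_le_sum fun i hi => (hineq i hi).2
        _ = _ := by
            rw [Finset.sum_add_distrib, Finset.sum_const, Finset.card_range, smul_eq_mul, hAsum]
    -- total degree decomposition
    have hD : ∑ v : Fin (n+2), a v = a 0 + C + a (((n+1 : ℕ)) : Fin (n+2)) := by
      have h1 : ∑ v : Fin (n+2), a v = ∑ j ∈ Finset.range (n+2), a ((j : ℕ) : Fin (n+2)) := by
        have := Fin.sum_univ_eq_sum_range (fun j => a ((j : ℕ) : Fin (n+2))) (n+2)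
        simpa using this
      rw [h1, Finset.sum_range_succ, Finset.sum_range_succ']
      have h2 : ((0 : ℕ) : Fin (n+2)) = 0 := by simp
      rw [h2, hC]
      simp only [hg]
      omega
    rw [hD]
    -- final arithmetic
    obtain ⟨K1, hK1⟩ : ∃ K1, k = K1 + 1 ∧ 1 ≤ K1 := ⟨k - 1, by omega⟩
    obtain ⟨hk1, hK1pos⟩ := hK1
    have hmm : m = s * K1 := by rw [hm, hk1]; norm_num
    have hnn : n = 2 * K1 + 2 := by omega
    set A0 := a 0
    set A1 := a (((n+1 : ℕ)) : Fin (n+2))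
    rw [hmm, hnn] at hsum1 hsum2
    simp only [show 2*K1+2-2 = 2*K1 from by omega] at hsum1 hsum2
    have key : (4*K1) * (s * k) ≤ (4*K1) * (A0 + C + A1) := by
      have h3 : (2*K1+2) * (A0 + A1) ≤ (4*K1) * (A0 + A1) :=
        Nat.mul_le_mul_right _ (by omega)
      rw [hk1]
      nlinarith [hsum1, hsum2, h3]
    exact Nat.le_of_mul_le_mul_left key (by omega)
  -- conclude
  unfold alphaSymb
  refine le_antisymm (Nat.sInf_le ⟨aw, hdeg, hmem⟩) (le_csInf ⟨s*k, aw, hdeg, hmem⟩ hlow)
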